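/- Let K : [0,∞) → [0,∞) be nondecreasing, let n ≥ 2 be an integer, let f be analytic on the unit disk 𝔻 with primitive F(z) = ∫₀ᶻ f(w) dw, and let F̃_n(z) = Σ_{i=0}^{n} ((−1)^i / i!) (z* − z)^i F^{(i)}(z*) for |z| > 1, where z* = 1/conj(z). Then there exist constants c₁, c₂ > 0 depending only on n such that for every a ∈ 𝔻: c₁ · ∫_𝔻 |f^{(n)}(ζ)|² (1 − |ζ|)^{2n−2} K(1 − |σ_a(ζ)|²) dA(ζ) ≤ ∫_{|z|>1} (|∂̄F̃_n(z)|²/(|z|^n − 1)²) · K(1 − 1/|σ_a(z)|²) dA(z) ≤ c₂ · ∫_𝔻 |f^{(n)}(ζ)|² (1 − |ζ|)^{2n−2} K(1 − |σ_a(ζ)|²) dA(ζ). -/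

import Mathlib

open MeasureTheory Metric Complex Set
open scoped ENNReal Real

noncomputable section

/-- The Möbius transformation `σ_a(z) = (a - z)/(1 - conj a · z)`. -/
def mobius (a z : ℂ) : ℂ := (a - z) / (1 - (starRingEnd ℂ) a * z)

/-- The Cauchy–Riemann (Wirtinger) operator `∂̄g = (1/2)(∂g/∂x + i ∂g/∂y)`. -/
def dbar (g : ℂ → ℂ) (z : ℂ) : ℂ :=
  (1 / 2 : ℂ) * (fderiv ℝ g z 1 + Complex.I * fderiv ℝ g z Complex.I)

/-- `z* = 1/conj(z)`. -/
def zstar (z : ℂ) : ℂ := ((starRingEnd ℂ) z)⁻¹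


/-- the real-linear map `v ↦ c * conj v` as a CLM, and its determinant. -/
def cconj (c : ℂ) : ℂ →L[ℝ] ℂ := c • (Complex.conjCLE.toContinuousLinearMap)

@[simp] lemma cconj_apply (c v : ℂ) : cconj c v = c * (starRingEnd ℂ) v := rfl

lemma det_cconj (c : ℂ) : (cconj c).det = - Complex.normSq c := by
  have : (cconj c).det = LinearMap.det ((cconj c) : ℂ →ₗ[ℝ] ℂ) := rfl
  rw [this, ← LinearMap.det_toMatrix Complex.basisOneI, Matrix.det_fin_two]
  simp [LinearMap.toMatrix_apply, Complex.coe_basisOneI_repr, Complex.coe_basisOneI, Complex.normSq_apply, cconj]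
  ring

lemma hasFDerivAt_zstar {z : ℂ} (hz : z ≠ 0) :
    HasFDerivAt zstar (cconj (-(zstar z)^2)) z := by
  have hc : (starRingEnd ℂ) z ≠ 0 := by simpa using hz
  have h1 : HasDerivAt (fun u : ℂ => u⁻¹) (-(((starRingEnd ℂ) z) ^ 2)⁻¹) ((starRingEnd ℂ) z) :=
    hasDerivAt_inv hc
  have h2 : HasFDerivAt (fun z : ℂ => (starRingEnd ℂ) z)
      (Complex.conjCLE.toContinuousLinearMap) z :=
    Complex.conjCLE.toContinuousLinearMap.hasFDerivAt
  have h3 := h1.comp_hasFDerivAt z h2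
  have hcc : cconj (-(zstar z)^2)
      = (-(((starRingEnd ℂ) z) ^ 2)⁻¹) • Complex.conjCLE.toContinuousLinearMap := by
    rw [cconj, zstar, inv_pow]
  rw [hcc]
  exact h3

lemma dbar_eq_of_hasFDerivAt {g : ℂ → ℂ} {z : ℂ} {D : ℂ →L[ℝ] ℂ} (h : HasFDerivAt g D z) :
    dbar g z = (1 / 2 : ℂ) * (D 1 + Complex.I * D Complex.I) := by
  rw [dbar, h.fderiv]

lemma analyticOnNhd_iteratedDeriv {F : ℂ → ℂ} (hF : AnalyticOnNhd ℂ F (ball (0:ℂ) 1)) (i : ℕ) :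
    AnalyticOnNhd ℂ (iteratedDeriv i F) (ball (0:ℂ) 1) := by
  induction i with
  | zero => simpa using hF
  | succ i ih => rw [iteratedDeriv_succ]; exact ih.deriv

lemma hasDerivAt_iteratedDeriv {F : ℂ → ℂ} (hF : AnalyticOnNhd ℂ F (ball (0:ℂ) 1)) (i : ℕ)
    {w : ℂ} (hw : w ∈ ball (0:ℂ) 1) :
    HasDerivAt (iteratedDeriv i F) (iteratedDeriv (i+1) F w) w := by
  rw [iteratedDeriv_succ]
  exact ((analyticOnNhd_iteratedDeriv hF i w hw).differentiableAt).hasDerivAt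

lemma norm_zstar (z : ℂ) : ‖zstar z‖ = ‖z‖⁻¹ := by
  simp [zstar]

lemma zstar_mem_ball {z : ℂ} (hz : 1 < ‖z‖) : zstar z ∈ ball (0:ℂ) 1 := by
  simp only [mem_ball, dist_zero_right, norm_zstar]
  rw [inv_lt_one_iff₀]; right; exact hz

lemma dbar_Ftil {F Ftil : ℂ → ℂ} (n : ℕ)
    (hF : AnalyticOnNhd ℂ F (ball (0:ℂ) 1))
    (hFtil : ∀ z : ℂ, Ftil z =
      ∑ i ∈ Finset.range (n + 1),
        ((-1 : ℂ) ^ i / (Nat.factorial i : ℂ)) * (zstar z - z) ^ i *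
          iteratedDeriv i F (zstar z))
    {z : ℂ} (hz : 1 < ‖z‖) :
    dbar Ftil z = ((-1 : ℂ) ^ (n+1) / (Nat.factorial n : ℂ)) * (zstar z - z) ^ n *
      (zstar z)^2 * iteratedDeriv (n+1) F (zstar z) := by
  have hz0 : z ≠ 0 := by
    intro h; rw [h] at hz; norm_num at hz
  set w := zstar z with hwdef
  have hw : w ∈ ball (0:ℂ) 1 := zstar_mem_ball hz
  set c : ℕ → ℂ := fun i => ((-1 : ℂ) ^ i / (Nat.factorial i : ℂ)) with hc
  set G : ℕ → ℂ := fun i => iteratedDeriv i F w with hG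
  set A : ℂ →L[ℝ] ℂ := cconj (-(w^2)) with hA
  set idR : ℂ →L[ℝ] ℂ := ContinuousLinearMap.id ℝ ℂ with hidR
  set D : ℕ → (ℂ →L[ℝ] ℂ) := fun i =>
    c i • (((w - z) ^ i) • (G (i+1) • A)
      + G i • (((i : ℂ) * (w - z) ^ (i-1)) • (A - idR))) with hD
  -- Ftil has the fderiv ∑ D i at z
  have hFtil' : Ftil = fun z => ∑ i ∈ Finset.range (n + 1),
      c i * ((zstar z - z) ^ i * iteratedDeriv i F (zstar z)) := by
    funext u
    rw [hFtil u]
    exact Finset.sum_congr rfl (fun i _ => by ring)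
  have hder : HasFDerivAt Ftil (∑ i ∈ Finset.range (n+1), D i) z := by
    rw [hFtil']
    apply HasFDerivAt.fun_sum
    intro i _
    have hzs : HasFDerivAt zstar A z := hasFDerivAt_zstar hz0
    have hsub : HasFDerivAt (fun z : ℂ => zstar z - z) (A - idR) z :=
      hzs.sub (hasFDerivAt_id z)
    have hpow : HasDerivAt (fun u : ℂ => u ^ i) ((i : ℂ) * (w - z) ^ (i-1)) (w - z) :=
      hasDerivAt_pow i (w - z)
    have hP : HasFDerivAt ((fun u : ℂ => u ^ i) ∘ (fun z : ℂ => zstar z - z))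
        (((i : ℂ) * (w - z) ^ (i-1)) • (A - idR)) z :=
      HasDerivAt.comp_hasFDerivAt (x := z) (hf := hsub) hpow
    have hQ : HasFDerivAt (fun z : ℂ => iteratedDeriv i F (zstar z)) (G (i+1) • A) z :=
      HasDerivAt.comp_hasFDerivAt (x := z) (hf := hzs) (hasDerivAt_iteratedDeriv hF i hw)
    have h5 := (hP.mul hQ).const_mul (c i)
    exact h5
  -- evaluate dbar
  rw [dbar_eq_of_hasFDerivAt hder]
  have hA1 : A 1 = -(w^2) := by simp [hA]
  have hAI : A Complex.I = w^2 * Complex.I := by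
    simp [hA, Complex.conj_I]
  have happ : ∀ v : ℂ, (∑ i ∈ Finset.range (n+1), D i) v
      = ∑ i ∈ Finset.range (n+1),
          c i * ((w - z) ^ i * (G (i+1) * (A v))
            + G i * (((i : ℂ) * (w - z) ^ (i-1)) * (A v - v))) := by
    intro v
    rw [ContinuousLinearMap.sum_apply]
    refine Finset.sum_congr rfl (fun i _ => ?_)
    simp only [hD, ContinuousLinearMap.smul_apply, ContinuousLinearMap.add_apply,
      ContinuousLinearMap.sub_apply, ContinuousLinearMap.id_apply, smul_eq_mul, hidR]
  rw [happ 1, happ Complex.I, hA1, hAI]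
  -- turn into a single sum
  rw [Finset.mul_sum, ← Finset.sum_add_distrib, Finset.mul_sum]
  set u : ℕ → ℂ := fun i => c i * ((w - z) ^ i * G (i+1)) with hu
  have hterm : ∀ i ∈ Finset.range (n+1),
      (1/2 : ℂ) * (c i * ((w - z) ^ i * (G (i+1) * (-(w^2)))
            + G i * (((i : ℂ) * (w - z) ^ (i-1)) * (-(w^2) - 1)))
        + Complex.I * (c i * ((w - z) ^ i * (G (i+1) * (w^2 * Complex.I))
            + G i * (((i : ℂ) * (w - z) ^ (i-1)) * (w^2 * Complex.I - Complex.I)))))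
      = (-(w^2)) * (u i + c i * (i : ℂ) * ((w - z) ^ (i-1) * G i)) := by
    intro i _
    have hI : Complex.I * Complex.I = -1 := Complex.I_mul_I
    rw [hu]
    ring_nf
    rw [Complex.I_sq]
    ring
  rw [Finset.sum_congr rfl hterm, ← Finset.mul_sum]
  -- telescoping
  have htel : ∑ i ∈ Finset.range (n+1),
      (u i + c i * (i : ℂ) * ((w - z) ^ (i-1) * G i)) = u n := by
    have hstep : ∀ i : ℕ, u (i+1) + c (i+1) * ((i:ℕ)+1 : ℂ) * ((w - z) ^ i * G (i+1))
        = u (i+1) - u i := by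
      intro i
      have hcc : c (i+1) * ((i:ℕ)+1 : ℂ) = - c i := by
        rw [hc]
        have h1 : ((Nat.factorial (i+1) : ℂ)) = ((i:ℂ)+1) * (Nat.factorial i : ℂ) := by
          push_cast [Nat.factorial_succ]; ring
        have h2 : (Nat.factorial i : ℂ) ≠ 0 := by
          exact_mod_cast Nat.cast_ne_zero.mpr (Nat.factorial_ne_zero i)
        have h3 : ((i:ℂ)+1) ≠ 0 := by
          have h4 : ((i:ℂ)+1) = ((i+1 : ℕ) : ℂ) := by push_cast; ring
          rw [h4]
          exact_mod_cast Nat.succ_ne_zero i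
        field_simp [h1]
        rw [h1]
        ring
      rw [hcc, hu]
      ring
    rw [Finset.sum_range_succ']
    simp only [Nat.cast_zero, mul_zero, zero_mul, add_zero]
    have hbody : ∀ i ∈ Finset.range n,
        u (i+1) + c (i+1) * (((i+1):ℕ) : ℂ) * ((w - z) ^ ((i+1)-1) * G (i+1))
        = u (i+1) - u i := by
      intro i _
      push_cast
      simpa using hstep i
    rw [Finset.sum_congr rfl hbody, Finset.sum_range_sub u]
    ring
  rw [htel, hu, hc]
  ring

lemma normSq_mobius_identity (a ζ : ℂ) :
    Complex.normSq (1 - (starRingEnd ℂ) a * ζ) - Complex.normSq (a - ζ)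
      = (1 - Complex.normSq a) * (1 - Complex.normSq ζ) := by
  simp only [Complex.normSq_apply, Complex.sub_re, Complex.sub_im, Complex.mul_re,
    Complex.mul_im, Complex.one_re, Complex.one_im, Complex.conj_re, Complex.conj_im]
  ring

lemma norm_sq_eq_normSq (z : ℂ) : ‖z‖^2 = Complex.normSq z := by
  rw [Complex.sq_norm]

lemma mobius_norm_lt_one {a ζ : ℂ} (ha : ‖a‖ < 1) (hζ : ‖ζ‖ < 1) : ‖mobius a ζ‖ < 1 := by
  have hden : (1 : ℂ) - (starRingEnd ℂ) a * ζ ≠ 0 := by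
    intro h
    have h1 : ‖(starRingEnd ℂ) a * ζ‖ < 1 := by
      rw [norm_mul, RCLike.norm_conj]
      calc ‖a‖ * ‖ζ‖ ≤ ‖a‖ * 1 := by
            apply mul_le_mul_of_nonneg_left hζ.le (norm_nonneg a)
        _ < 1 := by simpa using ha
    have h2 : (starRingEnd ℂ) a * ζ = 1 := by linear_combination -h
    rw [h2] at h1; simp at h1
  have hkey := normSq_mobius_identity a ζ
  have hpos : 0 < (1 - Complex.normSq a) * (1 - Complex.normSq ζ) := by
    apply mul_pos <;> rw [← norm_sq_eq_normSq] <;> nlinarith [norm_nonneg a, norm_nonneg ζ]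
  have hdpos : 0 < Complex.normSq (1 - (starRingEnd ℂ) a * ζ) := by
    rwa [Complex.normSq_pos]
  have hlt : Complex.normSq (a - ζ) < Complex.normSq (1 - (starRingEnd ℂ) a * ζ) := by
    linarith
  rw [mobius, norm_div]
  have hdn : 0 < ‖1 - (starRingEnd ℂ) a * ζ‖ := norm_pos_iff.mpr hden
  rw [div_lt_one hdn]
  rw [← norm_sq_eq_normSq, ← norm_sq_eq_normSq] at hlt
  nlinarith [norm_nonneg (a - ζ), norm_nonneg (1 - (starRingEnd ℂ) a * ζ)]


lemma norm_mobius_zstar {a z : ℂ} (ha : ‖a‖ < 1) (hz : 1 < ‖z‖)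
    (hne : z ≠ (((starRingEnd ℂ) a)⁻¹ : ℂ)) :
    ‖mobius a (zstar z)‖ = ‖mobius a z‖⁻¹ := by
  have hz0 : z ≠ 0 := fun h => by rw [h] at hz; norm_num at hz
  have hcz : (starRingEnd ℂ) z ≠ 0 := by simpa using hz0
  have hza : z ≠ a := fun h => by rw [← h] at ha; linarith
  have hd2 : (starRingEnd ℂ) z - (starRingEnd ℂ) a ≠ 0 := by
    intro h
    exact hza (by
      have := congrArg (starRingEnd ℂ) (sub_eq_zero.mp h)
      simpa using this)
  have hd3 : (1 : ℂ) - (starRingEnd ℂ) a * z ≠ 0 := by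
    intro h
    rcases eq_or_ne a 0 with h0 | h0
    · rw [h0] at h; simp at h
    · have hca : (starRingEnd ℂ) a ≠ 0 := by simpa using h0
      apply hne
      rw [inv_eq_one_div, eq_div_iff hca]
      linear_combination -h
  have heq : mobius a (zstar z) = (a * (starRingEnd ℂ) z - 1) /
      ((starRingEnd ℂ) z - (starRingEnd ℂ) a) := by
    rw [mobius, zstar]
    rw [div_eq_div_iff]
    · field_simp
    · intro h
      apply hd2
      have : ((starRingEnd ℂ) z - (starRingEnd ℂ) a) / (starRingEnd ℂ) z = 0 := by
        rw [← h]; field_simp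
      exact (div_eq_zero_iff.mp this).resolve_right hcz
    · exact hd2
  have hnum : ‖a * (starRingEnd ℂ) z - 1‖ = ‖1 - (starRingEnd ℂ) a * z‖ := by
    have : a * (starRingEnd ℂ) z - 1 = (starRingEnd ℂ) (-(1 - (starRingEnd ℂ) a * z)) := by
      simp [map_sub, map_mul]
    rw [this, RCLike.norm_conj, norm_neg]
  have hden : ‖(starRingEnd ℂ) z - (starRingEnd ℂ) a‖ = ‖a - z‖ := by
    have : (starRingEnd ℂ) z - (starRingEnd ℂ) a = (starRingEnd ℂ) (-(a - z)) := by
      simp [map_sub]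
    rw [this, RCLike.norm_conj, norm_neg]
  rw [heq, mobius, norm_div, norm_div, hnum, hden]
  rw [inv_div]

lemma karg_zstar {a z : ℂ} (ha : ‖a‖ < 1) (hz : 1 < ‖z‖)
    (hne : z ≠ (((starRingEnd ℂ) a)⁻¹ : ℂ)) :
    1 - 1 / ‖mobius a z‖ ^ 2 = 1 - ‖mobius a (zstar z)‖ ^ 2 := by
  rw [norm_mobius_zstar ha hz hne]
  rw [inv_pow, one_div]

lemma iteratedDeriv_F_eq_f {F f : ℂ → ℂ}
    (hFprim : ∀ z ∈ ball (0 : ℂ) 1, HasDerivAt F (f z) z) (n : ℕ)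
    {w : ℂ} (hw : w ∈ ball (0:ℂ) 1) :
    iteratedDeriv (n+1) F w = iteratedDeriv n f w := by
  rw [iteratedDeriv_succ']
  apply Filter.EventuallyEq.iteratedDeriv_eq
  filter_upwards [isOpen_ball.mem_nhds hw] with u hu
  exact (hFprim u hu).deriv

lemma norm_zstar_sub {z : ℂ} (hz : z ≠ 0) :
    ‖zstar z - z‖ = |‖z‖^2 - 1| / ‖z‖ := by
  have hcz : (starRingEnd ℂ) z ≠ 0 := by simpa using hz
  have h1 : zstar z - z = (1 - ((Complex.normSq z : ℝ) : ℂ)) / (starRingEnd ℂ) z := by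
    rw [zstar]
    field_simp
    rw [mul_comm, Complex.mul_conj]
  rw [h1, norm_div, RCLike.norm_conj]
  congr 1
  have h2 : (1:ℂ) - ((Complex.normSq z : ℝ) : ℂ) = (((1 - ‖z‖^2 : ℝ)) : ℂ) := by
    rw [← norm_sq_eq_normSq]; push_cast; ring
  rw [h2, abs_sub_comm]; exact Complex.norm_real _

-- the weight factor appearing after change of variables
def Mfac (n : ℕ) (r : ℝ) : ℝ :=
  (1 - r^2)^(2*n) / ((1 - r^n)^2 * ((Nat.factorial n : ℝ))^2)

lemma Mfac_bounds {n : ℕ} (hn : 2 ≤ n) {r : ℝ} (hr0 : 0 ≤ r) (hr1 : r < 1) :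
    ((Nat.factorial n : ℝ)^2 * (n:ℝ)^2)⁻¹ * (1 - r)^(2*n-2) ≤ Mfac n r ∧
    Mfac n r ≤ (4:ℝ)^n / (Nat.factorial n : ℝ)^2 * (1 - r)^(2*n-2) := by
  have hfac : (0:ℝ) < (Nat.factorial n : ℝ) := by
    exact_mod_cast Nat.factorial_pos n
  have hnpos : (0:ℝ) < (n:ℝ) := by positivity
  set S : ℝ := ∑ k ∈ Finset.range n, r^k with hS
  have hgeom : (1 - r) * S = 1 - r^n := by
    have := geom_sum_mul r n
    rw [hS]
    linear_combination -this
  have hS1 : 1 ≤ S := by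
    rw [hS]
    calc (1:ℝ) = ∑ k ∈ Finset.range 1, r^k := by simp
      _ ≤ ∑ k ∈ Finset.range n, r^k := by
          apply Finset.sum_le_sum_of_subset_of_nonneg
          · exact Finset.range_subset_range.mpr (by omega)
          · intro i _ _; positivity
  have hSn : S ≤ (n:ℝ) := by
    rw [hS]
    calc ∑ k ∈ Finset.range n, r^k ≤ ∑ k ∈ Finset.range n, 1 := by
          apply Finset.sum_le_sum
          intro i _
          exact pow_le_one₀ hr0 hr1.le
      _ = (n:ℝ) := by simp
  have h1r : (0:ℝ) < 1 - r := by linarith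
  have hMeq : Mfac n r = (1-r)^(2*n-2) * (((1+r)^2)^n / (S^2 * (Nat.factorial n : ℝ)^2)) := by
    rw [Mfac, ← hgeom]
    have e1 : (1 - r^2) = (1-r)*(1+r) := by ring
    rw [e1, mul_pow, pow_mul (1-r), pow_mul (1+r)]
    have e2 : ((1-r)^2)^n = (1-r)^(2*n-2) * (1-r)^2 := by
      rw [← pow_mul, ← pow_add]
      congr 1
      omega
    rw [e2]
    have hne : ((1-r)^2 : ℝ) ≠ 0 := by positivity
    field_simp
  have hSpos : (0:ℝ) < S := by linarith
  have h4 : ((1+r)^2)^n ≤ (4:ℝ)^n := by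
    apply pow_le_pow_left₀ (by positivity)
    nlinarith
  have h1' : (1:ℝ) ≤ ((1+r)^2)^n := by
    apply one_le_pow₀
    nlinarith
  have hS2 : S^2 ≤ (n:ℝ)^2 := by nlinarith
  have hS2' : (1:ℝ) ≤ S^2 := by nlinarith
  constructor
  · rw [hMeq, mul_comm]
    apply mul_le_mul_of_nonneg_left _ (by positivity)
    rw [inv_eq_one_div, div_le_div_iff₀ (by positivity) (by positivity)]
    nlinarith [mul_le_mul_of_nonneg_right hS2
        (by positivity : (0:ℝ) ≤ (Nat.factorial n : ℝ)^2),
      mul_le_mul_of_nonneg_right h1'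
        (by positivity : (0:ℝ) ≤ (Nat.factorial n : ℝ)^2 * (n:ℝ)^2)]
  · rw [hMeq, mul_comm ((4:ℝ)^n / (Nat.factorial n : ℝ)^2)]
    apply mul_le_mul_of_nonneg_left _ (by positivity)
    rw [div_le_div_iff₀ (by positivity) (by positivity)]
    nlinarith [mul_le_mul_of_nonneg_right h4
        (by positivity : (0:ℝ) ≤ (Nat.factorial n : ℝ)^2),
      mul_le_mul_of_nonneg_left hS2'
        (by positivity : (0:ℝ) ≤ (4:ℝ)^n * (Nat.factorial n : ℝ)^2)]

lemma zstar_zstar {z : ℂ} (hz : z ≠ 0) : zstar (zstar z) = z := by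
  rw [zstar, zstar, map_inv₀, Complex.conj_conj, inv_inv]

lemma measurableSet_ext : MeasurableSet {z : ℂ | 1 < ‖z‖} :=
  (isOpen_lt continuous_const continuous_norm).measurableSet

lemma zstar_injOn : InjOn zstar {z : ℂ | 1 < ‖z‖} := by
  intro x hx y hy h
  have hx0 : x ≠ 0 := fun h0 => by simp [h0] at hx; linarith [hx]
  have hy0 : y ≠ 0 := fun h0 => by simp [h0] at hy; linarith [hy]
  rw [← zstar_zstar hx0, h, zstar_zstar hy0]

lemma zstar_image_ext : zstar '' {z : ℂ | 1 < ‖z‖} = ball (0:ℂ) 1 \ {0} := by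
  ext ζ
  constructor
  · rintro ⟨z, hz, rfl⟩
    simp only [mem_setOf_eq] at hz
    have hz0 : z ≠ 0 := fun h0 => by rw [h0] at hz; norm_num at hz
    refine ⟨zstar_mem_ball hz, ?_⟩
    simp only [mem_singleton_iff, zstar]
    intro h
    rw [inv_eq_zero] at h
    exact hz0 (by simpa using h)
  · rintro ⟨hζb, hζ0⟩
    simp only [mem_singleton_iff] at hζ0
    refine ⟨zstar ζ, ?_, zstar_zstar hζ0⟩
    simp only [mem_setOf_eq, norm_zstar]
    rw [one_lt_inv_iff₀]
    exact ⟨norm_pos_iff.mpr hζ0, by simpa [mem_ball, dist_zero_right] using hζb⟩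

lemma abs_det_cconj_zstar {z : ℂ} : |(cconj (-(zstar z)^2)).det| = (‖z‖⁻¹)^4 := by
  rw [det_cconj, abs_neg, _root_.abs_of_nonneg (Complex.normSq_nonneg _)]
  rw [← norm_sq_eq_normSq]
  rw [norm_neg, norm_pow, norm_zstar]
  ring

lemma cov_lintegral (g : ℂ → ℝ≥0∞) :
    ∫⁻ ζ in (ball (0:ℂ) 1 \ {0} : Set ℂ), g ζ
      = ∫⁻ z in {z : ℂ | 1 < ‖z‖}, ENNReal.ofReal ((‖z‖⁻¹)^4) * g (zstar z) := by
  rw [← zstar_image_ext]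
  rw [lintegral_image_eq_lintegral_abs_det_fderiv_mul volume measurableSet_ext
    (fun x hx => by
      have hx0 : x ≠ 0 := fun h0 => by
        simp only [mem_setOf_eq, h0] at hx; norm_num at hx
      exact (hasFDerivAt_zstar hx0).hasFDerivWithinAt) zstar_injOn g]
  refine setLIntegral_congr_fun measurableSet_ext ?_
  intro z hz
  beta_reduce
  rw [abs_det_cconj_zstar]

lemma real_factor_id {t : ℝ} (ht : 1 < t) {n : ℕ} (hn : 1 ≤ n) :
    (t⁻¹)^4 * Mfac n t⁻¹
      = (((t^2 - 1)/t)^n * (t⁻¹)^2 / (Nat.factorial n : ℝ))^2 / (t^n - 1)^2 := by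
  have ht0 : t ≠ 0 := by positivity
  have htn : 1 < t^n := one_lt_pow₀ ht (by omega)
  have htn0 : t^n ≠ 0 := by positivity
  have htn1 : t^n - 1 ≠ 0 := by linarith
  have hf0 : (Nat.factorial n : ℝ) ≠ 0 := by
    exact_mod_cast Nat.factorial_ne_zero n
  rw [Mfac]
  have e1 : 1 - t⁻¹^2 = (t^2 - 1)/t^2 := by field_simp
  have e2 : 1 - t⁻¹^n = (t^n - 1)/t^n := by rw [inv_pow]; field_simp
  rw [e1, e2]
  simp only [div_pow]
  have e3 : ((t:ℝ)^2 - 1)^(2*n) = (((t:ℝ)^2-1)^n)^2 := by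
    rw [mul_comm, pow_mul]
  have e4 : ((t:ℝ)^2)^(2*n) = ((t^n)^2)^2 := by
    rw [← pow_mul, ← pow_mul, ← pow_mul]
    congr 1
    omega
  rw [e3, e4]
  generalize ((t:ℝ)^2 - 1)^n = P
  generalize hu : (t:ℝ)^n = u at *
  field_simp

lemma exterior_integrand_eq
    (K : ℝ → ℝ) {a : ℂ} (ha : ‖a‖ < 1)
    {F f Ftil : ℂ → ℂ} {n : ℕ} (hn : 1 ≤ n)
    (hF : AnalyticOnNhd ℂ F (ball (0:ℂ) 1))
    (hFprim : ∀ z ∈ ball (0 : ℂ) 1, HasDerivAt F (f z) z)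
    (hFtil : ∀ z : ℂ, Ftil z =
      ∑ i ∈ Finset.range (n + 1),
        ((-1 : ℂ) ^ i / (Nat.factorial i : ℂ)) * (zstar z - z) ^ i *
          iteratedDeriv i F (zstar z))
    {z : ℂ} (hz : 1 < ‖z‖) (hne : z ≠ (((starRingEnd ℂ) a)⁻¹ : ℂ)) :
    ENNReal.ofReal ((‖z‖⁻¹)^4) *
        ENNReal.ofReal (Mfac n ‖zstar z‖ *
          (‖iteratedDeriv n f (zstar z)‖^2 * K (1 - ‖mobius a (zstar z)‖^2)))
      = ENNReal.ofReal (‖dbar Ftil z‖^2 / (‖z‖^n - 1)^2 * K (1 - 1/‖mobius a z‖^2)) := by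
  have ht0 : (0:ℝ) < ‖z‖ := by linarith
  rw [← ENNReal.ofReal_mul (by positivity)]
  congr 1
  rw [karg_zstar ha hz hne]
  -- compute the norm of dbar
  have hdb := dbar_Ftil n hF hFtil hz
  have hFf : iteratedDeriv (n+1) F (zstar z) = iteratedDeriv n f (zstar z) :=
    iteratedDeriv_F_eq_f hFprim n (zstar_mem_ball hz)
  rw [hFf] at hdb
  have hsub : ‖zstar z - z‖ = (‖z‖^2 - 1)/‖z‖ := by
    rw [norm_zstar_sub (fun h0 => by rw [h0] at hz; norm_num at hz)]
    rw [_root_.abs_of_nonneg (by nlinarith)]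
  have hnorm : ‖dbar Ftil z‖
      = ((‖z‖^2 - 1)/‖z‖)^n * (‖z‖⁻¹)^2 / (Nat.factorial n : ℝ)
          * ‖iteratedDeriv n f (zstar z)‖ := by
    rw [hdb]
    rw [norm_mul, norm_mul, norm_mul, norm_div, norm_pow, norm_neg, norm_one, one_pow,
      Complex.norm_natCast, norm_pow, norm_pow, hsub, norm_zstar]
    ring
  rw [hnorm, norm_zstar]
  have hrfi := real_factor_id hz hn
  set q := ‖iteratedDeriv n f (zstar z)‖
  set K' := K (1 - ‖mobius a (zstar z)‖^2)
  linear_combination (q^2 * K') * hrfi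

/-- The change-of-variables identity: the exterior `∂̄`-integral of the explicit
extension `F̃_n` is two-sidedly comparable, uniformly in `a ∈ 𝔻`, to the interior
weighted integral of `|f^{(n)}|²`. -/
theorem exterior_interior_comparison_qk
    (K : ℝ → ℝ)
    (hKmono : MonotoneOn K (Set.Ici (0 : ℝ)))
    (hKnn : ∀ t : ℝ, 0 ≤ t → 0 ≤ K t)
    (n : ℕ) (hn : 2 ≤ n)
    (f F : ℂ → ℂ)
    (hf : DifferentiableOn ℂ f (ball (0 : ℂ) 1))
    (hF0 : F 0 = 0)
    (hFprim : ∀ z ∈ ball (0 : ℂ) 1, HasDerivAt F (f z) z)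
    (Ftil : ℂ → ℂ)
    (hFtil : ∀ z : ℂ, Ftil z =
      ∑ i ∈ Finset.range (n + 1),
        ((-1 : ℂ) ^ i / (Nat.factorial i : ℂ)) * (zstar z - z) ^ i *
          iteratedDeriv i F (zstar z)) :
    ∃ c₁ c₂ : ℝ, 0 < c₁ ∧ 0 < c₂ ∧ ∀ a ∈ ball (0 : ℂ) 1,
      ENNReal.ofReal c₁ *
          (∫⁻ ζ in ball (0 : ℂ) 1,
            ENNReal.ofReal (‖iteratedDeriv n f ζ‖ ^ 2 * (1 - ‖ζ‖) ^ (2 * n - 2) *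
              K (1 - ‖mobius a ζ‖ ^ 2))) ≤
        (∫⁻ z in {z : ℂ | 1 < ‖z‖},
          ENNReal.ofReal (‖dbar Ftil z‖ ^ 2 / (‖z‖ ^ n - 1) ^ 2 *
            K (1 - 1 / ‖mobius a z‖ ^ 2))) ∧
      (∫⁻ z in {z : ℂ | 1 < ‖z‖},
          ENNReal.ofReal (‖dbar Ftil z‖ ^ 2 / (‖z‖ ^ n - 1) ^ 2 *
            K (1 - 1 / ‖mobius a z‖ ^ 2))) ≤
        ENNReal.ofReal c₂ *
          (∫⁻ ζ in ball (0 : ℂ) 1,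
            ENNReal.ofReal (‖iteratedDeriv n f ζ‖ ^ 2 * (1 - ‖ζ‖) ^ (2 * n - 2) *
              K (1 - ‖mobius a ζ‖ ^ 2))) := by
  have hfac : (0:ℝ) < (Nat.factorial n : ℝ) := by exact_mod_cast Nat.factorial_pos n
  have hnpos : (0:ℝ) < (n:ℝ) := by positivity
  refine ⟨((Nat.factorial n : ℝ)^2 * (n:ℝ)^2)⁻¹, (4:ℝ)^n / (Nat.factorial n : ℝ)^2,
    by positivity, by positivity, ?_⟩
  intro a ha
  rw [mem_ball, dist_zero_right] at ha
  set c₁ : ℝ := ((Nat.factorial n : ℝ)^2 * (n:ℝ)^2)⁻¹ with hc₁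
  set c₂ : ℝ := (4:ℝ)^n / (Nat.factorial n : ℝ)^2 with hc₂
  have hc₁0 : 0 ≤ c₁ := by positivity
  have hc₂0 : 0 ≤ c₂ := by positivity
  have hFanal : AnalyticOnNhd ℂ F (ball (0:ℂ) 1) :=
    DifferentiableOn.analyticOnNhd
      (fun z hz => ((hFprim z hz).differentiableAt).differentiableWithinAt) isOpen_ball
  set g : ℂ → ℝ≥0∞ := fun ζ => ENNReal.ofReal (Mfac n ‖ζ‖ *
    (‖iteratedDeriv n f ζ‖^2 * K (1 - ‖mobius a ζ‖^2))) with hg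
  set Ifun : ℂ → ℝ≥0∞ := fun ζ => ENNReal.ofReal (‖iteratedDeriv n f ζ‖ ^ 2 *
    (1 - ‖ζ‖) ^ (2 * n - 2) * K (1 - ‖mobius a ζ‖ ^ 2)) with hIfun
  -- Step A: the exterior integral equals the integral of g over the punctured disk
  have hstepA : (∫⁻ z in {z : ℂ | 1 < ‖z‖},
      ENNReal.ofReal (‖dbar Ftil z‖ ^ 2 / (‖z‖ ^ n - 1) ^ 2 *
        K (1 - 1 / ‖mobius a z‖ ^ 2)))
      = ∫⁻ ζ in (ball (0:ℂ) 1 \ {0} : Set ℂ), g ζ := by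
    rw [cov_lintegral g]
    apply lintegral_congr_ae
    have hnull : (volume : Measure ℂ) {(((starRingEnd ℂ) a)⁻¹ : ℂ)} = 0 :=
      measure_singleton _
    have h1 : ∀ᵐ (z : ℂ), z ≠ (((starRingEnd ℂ) a)⁻¹ : ℂ) := by
      rw [ae_iff]
      simpa using hnull
    filter_upwards [ae_restrict_mem measurableSet_ext, ae_restrict_of_ae h1] with z hz hzne
    exact (exterior_integrand_eq K ha (by omega) hFanal hFprim hFtil hz hzne).symm
  -- pointwise bounds on the punctured disk
  have hpt : ∀ ζ ∈ (ball (0:ℂ) 1 \ {0} : Set ℂ),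
      ENNReal.ofReal c₁ * Ifun ζ ≤ g ζ ∧ g ζ ≤ ENNReal.ofReal c₂ * Ifun ζ := by
    intro ζ hζ
    have hζb : ‖ζ‖ < 1 := by
      have := hζ.1; rwa [mem_ball, dist_zero_right] at this
    have hr0 : (0:ℝ) ≤ ‖ζ‖ := norm_nonneg ζ
    have hK0 : 0 ≤ K (1 - ‖mobius a ζ‖^2) := by
      apply hKnn
      have := mobius_norm_lt_one ha hζb
      nlinarith [norm_nonneg (mobius a ζ)]
    obtain ⟨hlow, hup⟩ := Mfac_bounds hn hr0 hζb
    set q := ‖iteratedDeriv n f ζ‖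
    have hq : 0 ≤ q := norm_nonneg _
    set K' := K (1 - ‖mobius a ζ‖^2)
    constructor
    · rw [← ENNReal.ofReal_mul hc₁0]
      apply ENNReal.ofReal_le_ofReal
      calc c₁ * (q^2 * (1-‖ζ‖)^(2*n-2) * K')
          = (c₁ * (1-‖ζ‖)^(2*n-2)) * (q^2 * K') := by ring
        _ ≤ Mfac n ‖ζ‖ * (q^2 * K') := by
            apply mul_le_mul_of_nonneg_right hlow (by positivity)
    · rw [← ENNReal.ofReal_mul hc₂0]
      apply ENNReal.ofReal_le_ofReal
      calc Mfac n ‖ζ‖ * (q^2 * K')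
          ≤ (c₂ * (1-‖ζ‖)^(2*n-2)) * (q^2 * K') := by
            apply mul_le_mul_of_nonneg_right hup (by positivity)
        _ = c₂ * (q^2 * (1-‖ζ‖)^(2*n-2) * K') := by ring
  -- the interior integral over the ball equals that over the punctured ball
  have hres : (volume : Measure ℂ).restrict (ball (0:ℂ) 1 \ {0} : Set ℂ)
      = (volume : Measure ℂ).restrict (ball (0:ℂ) 1) := by
    apply Measure.restrict_congr_set
    apply diff_ae_eq_self.mpr
    exact measure_mono_null Set.inter_subset_right (measure_singleton _)
  have hmeas : MeasurableSet (ball (0:ℂ) 1 \ {0} : Set ℂ) :=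
    measurableSet_ball.diff (measurableSet_singleton _)
  constructor
  · rw [hstepA, ← lintegral_const_mul' _ _ ENNReal.ofReal_ne_top, ← hres]
    apply lintegral_mono_ae
    filter_upwards [ae_restrict_mem hmeas] with ζ hζ
    exact (hpt ζ hζ).1
  · rw [hstepA, ← lintegral_const_mul' _ _ ENNReal.ofReal_ne_top, ← hres]
    apply lintegral_mono_ae
    filter_upwards [ae_restrict_mem hmeas] with ζ hζ
    exact (hpt ζ hζ).2

end
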